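/- arXiv:2312.08049 — 2 statements merged into one kernel-verified Lean document; each statement's English description precedes it below -/
import Mathlib

section
/- Let E be a looped c-coloring on r = R_{c−1}(3) − 1 vertices whose loops all have color c_ℓ and whose non-loop edges use only colors ≠ c_ℓ and contain no monochromatic triangle (i.e., E is an extremal Ramsey looped coloring). Then for every vertex v of E and every color c' ≠ c_ℓ, there are at least two non-loop edges of color c' incident to v. (Assuming the Ramsey multiplicity hypotheses A1 and A2, i.e., tightness of the bound ς = (R_{c−1}(3)−1)^{−2} and the SOS domination by K_{3,1} and K_{3,3} densities.) -/
open Finset Filter Topology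

attribute [local instance] Classical.propDecidable
set_option maxHeartbeats 1600000

/-- Density of monochromatic `t`-cliques of color `col` in a `c`-coloring of `K_n`. -/
noncomputable def monoDensity (n c t : ℕ) (col : Fin c) (G : Sym2 (Fin n) → Fin c) : ℝ :=
  (((Finset.powersetCard t (univ : Finset (Fin n))).filter
      (fun T => ∀ i ∈ T, ∀ j ∈ T, i ≠ j → G s(i, j) = col)).card : ℝ) / (n.choose t)

/-- Total density of monochromatic `t`-cliques. -/
noncomputable def totalMonoDensity (n c t : ℕ) (G : Sym2 (Fin n) → Fin c) : ℝ :=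
  ∑ col : Fin c, monoDensity n c t col G

/-- The Ramsey multiplicity function `m_c(t; n)`. -/
noncomputable def mcn (c t n : ℕ) : ℝ :=
  ⨅ G : Sym2 (Fin n) → Fin c, totalMonoDensity n c t G

/-- `G` contains a monochromatic clique of size `t`. -/
def hasMonoClique (n c t : ℕ) (G : Sym2 (Fin n) → Fin c) : Prop :=
  ∃ col : Fin c, ∃ T : Finset (Fin n), T.card = t ∧
    ∀ i ∈ T, ∀ j ∈ T, i ≠ j → G s(i, j) = col

/-- The `c`-color diagonal Ramsey number `R_c(t)`. -/
noncomputable def ramsey (c t : ℕ) : ℕ :=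
  sInf {n | ∀ G : Sym2 (Fin n) → Fin c, hasMonoClique n c t G}

/-- The vertices `a b d` form a monochromatic triangle of color `c₁` and the fourth vertex `y`
attaches in one of the patterns `H(2,1,0)`, `H(1,1,1)` or `H(0,2,1)`. -/
def badPattern {n c : ℕ} (G : Sym2 (Fin n) → Fin c) (a b d y : Fin n) : Prop :=
  ∃ c₁ : Fin c, G s(a, b) = c₁ ∧ G s(a, d) = c₁ ∧ G s(b, d) = c₁ ∧
    ((G s(y, a) = c₁ ∧ G s(y, b) = c₁ ∧ G s(y, d) ≠ c₁) ∨
     (G s(y, a) = c₁ ∧ G s(y, b) ≠ c₁ ∧ G s(y, d) ≠ c₁ ∧ G s(y, b) ≠ G s(y, d)) ∨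
     (G s(y, a) ≠ c₁ ∧ G s(y, b) ≠ c₁ ∧ G s(y, d) ≠ c₁ ∧ G s(y, a) = G s(y, b) ∧
       G s(y, d) ≠ G s(y, a)))

/-- The density `p(K̂_{3,1}; G)` of 4-sets spanning a configuration from
`H(2,1,0) ∪ H(1,1,1) ∪ H(0,2,1)`. -/
noncomputable def k31Density (n c : ℕ) (G : Sym2 (Fin n) → Fin c) : ℝ :=
  (((Finset.powersetCard 4 (univ : Finset (Fin n))).filter
      (fun T => ∃ a ∈ T, ∃ b ∈ T, ∃ d ∈ T, ∃ y ∈ T,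
        a ≠ b ∧ a ≠ d ∧ a ≠ y ∧ b ≠ d ∧ b ≠ y ∧ d ≠ y ∧
        badPattern G a b d y)).card : ℝ) / (n.choose 4)

/-- The six vertices span two disjoint monochromatic triangles of distinct colors with all
nine cross edges in a third color. -/
def k33Pattern {n c : ℕ} (G : Sym2 (Fin n) → Fin c) (a b d x y z : Fin n) : Prop :=
  ∃ c₁ c₂ c₃ : Fin c, c₁ ≠ c₂ ∧ c₁ ≠ c₃ ∧ c₂ ≠ c₃ ∧
    G s(a, b) = c₁ ∧ G s(a, d) = c₁ ∧ G s(b, d) = c₁ ∧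
    G s(x, y) = c₂ ∧ G s(x, z) = c₂ ∧ G s(y, z) = c₂ ∧
    (∀ u ∈ ({a, b, d} : Finset (Fin n)), ∀ v ∈ ({x, y, z} : Finset (Fin n)),
      G s(u, v) = c₃)

/-- The density `p(K̂_{3,3}; G)` of 6-sets spanning the two-triangle configuration. -/
noncomputable def k33Density (n c : ℕ) (G : Sym2 (Fin n) → Fin c) : ℝ :=
  (((Finset.powersetCard 6 (univ : Finset (Fin n))).filter
      (fun T => ∃ a ∈ T, ∃ b ∈ T, ∃ d ∈ T, ∃ x ∈ T, ∃ y ∈ T, ∃ z ∈ T,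
        [a, b, d, x, y, z].Pairwise (· ≠ ·) ∧ k33Pattern G a b d x y z)).card : ℝ)
    / (n.choose 6)

section DegAux

variable {c r k : ℕ}

def psiMap (u v₀ a : Fin r) : Fin r := if a = u then v₀ else a

lemma psiMap_special {u v₀ a : Fin r} (h : a = u ∨ a = v₀) (hu : u ≠ v₀) :
    psiMap u v₀ a = v₀ := by
  unfold psiMap; rcases h with h | h <;> subst h
  · rw [if_pos rfl]
  · rw [if_neg (fun hh => hu hh.symm)]

lemma psiMap_ord {u v₀ a : Fin r} (h : a ≠ u) : psiMap u v₀ a = a := if_neg h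

def gcol (E : Sym2 (Fin r) → Fin c) (u v₀ : Fin r) (cl cp : Fin c)
    (x y : Fin r × Fin 2 × Fin k) : Fin c :=
  if x.1 = y.1 then
    (if x.1 = u ∨ x.1 = v₀ then (if x.2.1 = 1 ∧ y.2.1 = 1 then cl else cp) else cl)
  else if (x.1 = u ∧ y.1 = v₀) ∨ (x.1 = v₀ ∧ y.1 = u) then
    (if x.2.1 = 1 ∧ y.2.1 = 1 then cp else cl)
  else E s(psiMap u v₀ x.1, psiMap u v₀ y.1)

lemma gcol_symm (E : Sym2 (Fin r) → Fin c) (u v₀ : Fin r) (cl cp : Fin c)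
    (x y : Fin r × Fin 2 × Fin k) :
    gcol E u v₀ cl cp x y = gcol E u v₀ cl cp y x := by
  unfold gcol
  split_ifs <;>
    first
      | rfl
      | (exact congrArg E (Sym2.eq_swap))
      | tauto
      | (exfalso; simp_all)

lemma gcol_same_special {E : Sym2 (Fin r) → Fin c} {u v₀ : Fin r} {cl cp : Fin c}
    {x y : Fin r × Fin 2 × Fin k} (h : x.1 = y.1) (hs : x.1 = u ∨ x.1 = v₀) :
    gcol E u v₀ cl cp x y = if x.2.1 = 1 ∧ y.2.1 = 1 then cl else cp := by
  unfold gcol; rw [if_pos h, if_pos hs]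

lemma gcol_same_ord {E : Sym2 (Fin r) → Fin c} {u v₀ : Fin r} {cl cp : Fin c}
    {x y : Fin r × Fin 2 × Fin k} (h : x.1 = y.1) (hs : ¬(x.1 = u ∨ x.1 = v₀)) :
    gcol E u v₀ cl cp x y = cl := by
  unfold gcol; rw [if_pos h, if_neg hs]

lemma gcol_pair {E : Sym2 (Fin r) → Fin c} {u v₀ : Fin r} {cl cp : Fin c}
    {x y : Fin r × Fin 2 × Fin k} (h : ¬ x.1 = y.1)
    (hp : (x.1 = u ∧ y.1 = v₀) ∨ (x.1 = v₀ ∧ y.1 = u)) :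
    gcol E u v₀ cl cp x y = if x.2.1 = 1 ∧ y.2.1 = 1 then cp else cl := by
  unfold gcol; rw [if_neg h, if_pos hp]

lemma gcol_cross {E : Sym2 (Fin r) → Fin c} {u v₀ : Fin r} {cl cp : Fin c}
    {x y : Fin r × Fin 2 × Fin k} (h : ¬ x.1 = y.1)
    (hp : ¬((x.1 = u ∧ y.1 = v₀) ∨ (x.1 = v₀ ∧ y.1 = u))) :
    gcol E u v₀ cl cp x y = E s(psiMap u v₀ x.1, psiMap u v₀ y.1) := by
  unfold gcol; rw [if_neg h, if_neg hp]

lemma fin2_eq_zero {a : Fin 2} (h : a ≠ 1) : a = 0 := by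
  have h2 := a.isLt
  have h1 : a.val ≠ 1 := fun hv => h (Fin.ext (by simpa using hv))
  exact Fin.ext (by omega)

def SameShape (u v₀ : Fin r) (x y z : Fin r × Fin 2 × Fin k) : Prop :=
  x.1 = y.1 ∧ x.1 = z.1 ∧
    ((¬(x.1 = u ∨ x.1 = v₀)) ∨
     ((x.2.1 = 1 ∧ y.2.1 = 1 ∧ z.2.1 = 1) ∨
      (¬(x.2.1 = 1 ∧ y.2.1 = 1) ∧ ¬(x.2.1 = 1 ∧ z.2.1 = 1) ∧ ¬(y.2.1 = 1 ∧ z.2.1 = 1))))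

def PairShape (u v₀ : Fin r) (x y z : Fin r × Fin 2 × Fin k) : Prop :=
  ((x.1 = u ∧ z.1 = v₀) ∨ (x.1 = v₀ ∧ z.1 = u)) ∧ x.1 = y.1 ∧
    x.2.1 = 1 ∧ y.2.1 = 1 ∧ z.2.1 = 0

variable {E : Sym2 (Fin r) → Fin c} {u v₀ : Fin r} {cl cp : Fin c}

lemma psi_ne {a b : Fin r} (hu : u ≠ v₀) (hab : a ≠ b)
    (hnp : ¬((a = u ∧ b = v₀) ∨ (a = v₀ ∧ b = u))) :
    psiMap u v₀ a ≠ psiMap u v₀ b := by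
  unfold psiMap
  by_cases ha : a = u <;> by_cases hb : b = u
  · exact absurd (ha.trans hb.symm) hab
  · rw [if_pos ha, if_neg hb]; intro hh; exact hnp (Or.inl ⟨ha, hh.symm⟩)
  · rw [if_neg ha, if_pos hb]; intro hh; exact hnp (Or.inr ⟨hh, hb⟩)
  · rw [if_neg ha, if_neg hb]; exact hab

lemma gcol_pair_case
    (hu : u ≠ v₀) (hcc : cp ≠ cl)
    (hedge : ∀ a b : Fin r, a ≠ b → E s(a, b) ≠ cl)
    (Hdef : ∀ w : Fin r, w ≠ v₀ → E s(v₀, w) = cp → w = u)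
    {x y z : Fin r × Fin 2 × Fin k} {col : Fin c}
    (h1 : x.1 = y.1) (h2 : x.1 ≠ z.1)
    (hxy : gcol E u v₀ cl cp x y = col) (hxz : gcol E u v₀ cl cp x z = col)
    (hyz : gcol E u v₀ cl cp y z = col) :
    PairShape u v₀ x y z := by
  by_cases hp : (x.1 = u ∧ z.1 = v₀) ∨ (x.1 = v₀ ∧ z.1 = u)
  · have hs : x.1 = u ∨ x.1 = v₀ := hp.imp And.left And.left
    have exz : (if x.2.1 = 1 ∧ z.2.1 = 1 then cp else cl) = col := by
      rw [← hxz, gcol_pair h2 hp]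
    have hyznep : ¬ y.1 = z.1 := fun hh => h2 (h1.trans hh)
    have hpy : (y.1 = u ∧ z.1 = v₀) ∨ (y.1 = v₀ ∧ z.1 = u) := by
      rcases hp with ⟨ha, hb⟩ | ⟨ha, hb⟩
      · exact Or.inl ⟨h1 ▸ ha, hb⟩
      · exact Or.inr ⟨h1 ▸ ha, hb⟩
    have eyz : (if y.2.1 = 1 ∧ z.2.1 = 1 then cp else cl) = col := by
      rw [← hyz, gcol_pair hyznep hpy]
    have exy : (if x.2.1 = 1 ∧ y.2.1 = 1 then cl else cp) = col := by
      rw [← hxy, gcol_same_special h1 hs]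
    by_cases hz : z.2.1 = 1
    · exfalso
      by_cases hx1 : x.2.1 = 1
      · rw [if_pos ⟨hx1, hz⟩] at exz
        by_cases hy1 : y.2.1 = 1
        · rw [if_pos ⟨hx1, hy1⟩] at exy; exact hcc (exz.trans exy.symm)
        · rw [if_neg (fun hh => hy1 hh.1)] at eyz; exact hcc (exz.trans eyz.symm)
      · rw [if_neg (fun hh => hx1 hh.1)] at exz
        rw [if_neg (fun hh => hx1 hh.1)] at exy
        exact hcc (exy.trans exz.symm)
    · have hz0 : z.2.1 = 0 := fin2_eq_zero hz
      rw [if_neg (fun hh => hz hh.2)] at exz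
      by_cases hxy1 : x.2.1 = 1 ∧ y.2.1 = 1
      · exact ⟨hp, h1, hxy1.1, hxy1.2, hz0⟩
      · exfalso; rw [if_neg hxy1] at exy; exact hcc (exy.trans exz.symm)
  · exfalso
    have hψ : psiMap u v₀ x.1 ≠ psiMap u v₀ z.1 := psi_ne hu h2 hp
    have exz : E s(psiMap u v₀ x.1, psiMap u v₀ z.1) = col := by
      rw [← hxz, gcol_cross h2 hp]
    have hcolcl : col ≠ cl := fun hh => hedge _ _ hψ (exz.trans hh)
    by_cases hs : x.1 = u ∨ x.1 = v₀
    · have exy : (if x.2.1 = 1 ∧ y.2.1 = 1 then cl else cp) = col := by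
        rw [← hxy, gcol_same_special h1 hs]
      by_cases hb : x.2.1 = 1 ∧ y.2.1 = 1
      · rw [if_pos hb] at exy; exact hcolcl exy.symm
      · rw [if_neg hb] at exy
        have hψx : psiMap u v₀ x.1 = v₀ := psiMap_special hs hu
        have hzu : z.1 ≠ u := by
          rcases hs with hxu | hxv
          · exact fun hh => h2 (hxu.trans hh.symm)
          · exact fun hh => hp (Or.inr ⟨hxv, hh⟩)
        have hψz : psiMap u v₀ z.1 = z.1 := psiMap_ord hzu
        have hzv : z.1 ≠ v₀ := by
          rcases hs with hxu | hxv
          · exact fun hh => hp (Or.inl ⟨hxu, hh⟩)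
          · exact fun hh => h2 (hxv.trans hh.symm)
        have hEcp : E s(v₀, z.1) = cp := by
          rw [← hψx, ← hψz]; exact exz.trans exy.symm
        exact hzu (Hdef z.1 hzv hEcp)
    · have exy : cl = col := by rw [← hxy, gcol_same_ord h1 hs]
      exact hcolcl exy.symm

lemma gcol_same_case (hcc : cp ≠ cl)
    {x y z : Fin r × Fin 2 × Fin k} {col : Fin c}
    (h1 : x.1 = y.1) (h2 : x.1 = z.1)
    (hxy : gcol E u v₀ cl cp x y = col) (hxz : gcol E u v₀ cl cp x z = col)
    (hyz : gcol E u v₀ cl cp y z = col) :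
    SameShape u v₀ x y z := by
  by_cases hs : x.1 = u ∨ x.1 = v₀
  · refine ⟨h1, h2, Or.inr ?_⟩
    have h3 : y.1 = z.1 := h1.symm.trans h2
    have hys : y.1 = u ∨ y.1 = v₀ := h1 ▸ hs
    have exy : (if x.2.1 = 1 ∧ y.2.1 = 1 then cl else cp) = col := by
      rw [← hxy, gcol_same_special h1 hs]
    have exz : (if x.2.1 = 1 ∧ z.2.1 = 1 then cl else cp) = col := by
      rw [← hxz, gcol_same_special h2 hs]
    have eyz : (if y.2.1 = 1 ∧ z.2.1 = 1 then cl else cp) = col := by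
      rw [← hyz, gcol_same_special h3 hys]
    by_cases ha : x.2.1 = 1 <;> by_cases hb : y.2.1 = 1 <;> by_cases hd : z.2.1 = 1
    · exact Or.inl ⟨ha, hb, hd⟩
    · exfalso
      rw [if_pos ⟨ha, hb⟩] at exy; rw [if_neg (fun hh => hd hh.2)] at exz
      exact hcc (exz.trans exy.symm)
    · exfalso
      rw [if_pos ⟨ha, hd⟩] at exz; rw [if_neg (fun hh => hb hh.2)] at exy
      exact hcc (exy.trans exz.symm)
    · exact Or.inr ⟨fun hh => hb hh.2, fun hh => hd hh.2, fun hh => hb hh.1⟩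
    · exfalso
      rw [if_pos ⟨hb, hd⟩] at eyz; rw [if_neg (fun hh => ha hh.1)] at exy
      exact hcc (exy.trans eyz.symm)
    · exact Or.inr ⟨fun hh => ha hh.1, fun hh => hd hh.2, fun hh => hd hh.2⟩
    · exact Or.inr ⟨fun hh => ha hh.1, fun hh => ha hh.1, fun hh => hb hh.1⟩
    · exact Or.inr ⟨fun hh => ha hh.1, fun hh => ha hh.1, fun hh => hb hh.1⟩
  · exact ⟨h1, h2, Or.inl hs⟩

lemma gcol_distinct_case
    (hu : u ≠ v₀) (hcc : cp ≠ cl)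
    (hedge : ∀ a b : Fin r, a ≠ b → E s(a, b) ≠ cl)
    (htri : ∀ a b d : Fin r, a ≠ b → a ≠ d → b ≠ d →
      ¬(E s(a, b) = E s(a, d) ∧ E s(a, d) = E s(b, d)))
    (Hdef : ∀ w : Fin r, w ≠ v₀ → E s(v₀, w) = cp → w = u)
    {x y z : Fin r × Fin 2 × Fin k} {col : Fin c}
    (h1 : x.1 ≠ y.1) (h2 : x.1 ≠ z.1) (h3 : y.1 ≠ z.1)
    (hxy : gcol E u v₀ cl cp x y = col) (hxz : gcol E u v₀ cl cp x z = col)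
    (hyz : gcol E u v₀ cl cp y z = col) :
    False := by
  by_cases p1 : (x.1 = u ∧ y.1 = v₀) ∨ (x.1 = v₀ ∧ y.1 = u)
  · have hzu : z.1 ≠ u := by
      rcases p1 with ⟨ha, hb⟩ | ⟨ha, hb⟩
      · exact fun hh => h2 (ha.trans hh.symm)
      · exact fun hh => h3 (hb.trans hh.symm)
    have hzv : z.1 ≠ v₀ := by
      rcases p1 with ⟨ha, hb⟩ | ⟨ha, hb⟩
      · exact fun hh => h3 (hb.trans hh.symm)
      · exact fun hh => h2 (ha.trans hh.symm)
    have p2 : ¬((x.1 = u ∧ z.1 = v₀) ∨ (x.1 = v₀ ∧ z.1 = u)) := by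
      rintro (⟨-, hb⟩ | ⟨-, hb⟩); exacts [hzv hb, hzu hb]
    have hψx : psiMap u v₀ x.1 = v₀ := psiMap_special (p1.imp And.left And.left) hu
    have hψz : psiMap u v₀ z.1 = z.1 := psiMap_ord hzu
    have exz : E s(v₀, z.1) = col := by
      rw [← hψx, ← hψz, ← gcol_cross (E := E) (cl := cl) (cp := cp) h2 p2]
      exact hxz
    have hcolcl : col ≠ cl := by
      intro hh; exact hedge v₀ z.1 (fun hv => hzv hv.symm) (exz.trans hh)
    have exy : (if x.2.1 = 1 ∧ y.2.1 = 1 then cp else cl) = col := by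
      rw [← hxy, gcol_pair h1 p1]
    by_cases hb : x.2.1 = 1 ∧ y.2.1 = 1
    · rw [if_pos hb] at exy
      exact hzu (Hdef z.1 hzv (exz.trans exy.symm))
    · rw [if_neg hb] at exy; exact hcolcl exy.symm
  · by_cases p2 : (x.1 = u ∧ z.1 = v₀) ∨ (x.1 = v₀ ∧ z.1 = u)
    · have hyu : y.1 ≠ u := by
        rcases p2 with ⟨ha, hb⟩ | ⟨ha, hb⟩
        · exact fun hh => h1 (ha.trans hh.symm)
        · exact fun hh => p1 (Or.inr ⟨ha, hh⟩)
      have hyv : y.1 ≠ v₀ := by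
        rcases p2 with ⟨ha, hb⟩ | ⟨ha, hb⟩
        · exact fun hh => p1 (Or.inl ⟨ha, hh⟩)
        · exact fun hh => h1 (ha.trans hh.symm)
      have hψx : psiMap u v₀ x.1 = v₀ := psiMap_special (p2.imp And.left And.left) hu
      have hψy : psiMap u v₀ y.1 = y.1 := psiMap_ord hyu
      have exy : E s(v₀, y.1) = col := by
        rw [← hψx, ← hψy, ← gcol_cross (E := E) (cl := cl) (cp := cp) h1 p1]
        exact hxy
      have hcolcl : col ≠ cl := by
        intro hh; exact hedge v₀ y.1 (fun hv => hyv hv.symm) (exy.trans hh)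
      have exz : (if x.2.1 = 1 ∧ z.2.1 = 1 then cp else cl) = col := by
        rw [← hxz, gcol_pair h2 p2]
      by_cases hb : x.2.1 = 1 ∧ z.2.1 = 1
      · rw [if_pos hb] at exz
        exact hyu (Hdef y.1 hyv (exy.trans exz.symm))
      · rw [if_neg hb] at exz; exact hcolcl exz.symm
    · by_cases p3 : (y.1 = u ∧ z.1 = v₀) ∨ (y.1 = v₀ ∧ z.1 = u)
      · have hxu : x.1 ≠ u := by
          rcases p3 with ⟨ha, hb⟩ | ⟨ha, hb⟩
          · exact fun hh => h1 (hh.trans ha.symm)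
          · exact fun hh => h2 (hh.trans hb.symm)
        have hxv : x.1 ≠ v₀ := by
          rcases p3 with ⟨ha, hb⟩ | ⟨ha, hb⟩
          · exact fun hh => h2 (hh.trans hb.symm)
          · exact fun hh => h1 (hh.trans ha.symm)
        have hψy : psiMap u v₀ y.1 = v₀ := psiMap_special (p3.imp And.left And.left) hu
        have hψx : psiMap u v₀ x.1 = x.1 := psiMap_ord hxu
        have exy0 : E s(psiMap u v₀ x.1, psiMap u v₀ y.1) = col := by
          rw [← gcol_cross (E := E) (cl := cl) (cp := cp) h1 p1]; exact hxy
        rw [Sym2.eq_swap, hψx, hψy] at exy0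
        have exy : E s(v₀, x.1) = col := exy0
        have hcolcl : col ≠ cl := by
          intro hh
          exact hedge v₀ x.1 (fun hv => hxv hv.symm) (exy.trans hh)
        have eyz : (if y.2.1 = 1 ∧ z.2.1 = 1 then cp else cl) = col := by
          rw [← hyz, gcol_pair h3 p3]
        by_cases hb : y.2.1 = 1 ∧ z.2.1 = 1
        · rw [if_pos hb] at eyz
          exact hxu (Hdef x.1 hxv (exy.trans eyz.symm))
        · rw [if_neg hb] at eyz; exact hcolcl eyz.symm
      · have q1 := psi_ne (u := u) (v₀ := v₀) hu h1 p1
        have q2 := psi_ne (u := u) (v₀ := v₀) hu h2 p2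
        have q3 := psi_ne (u := u) (v₀ := v₀) hu h3 p3
        refine htri _ _ _ q1 q2 q3 ⟨?_, ?_⟩
        · rw [← gcol_cross (E := E) (cl := cl) (cp := cp) h1 p1,
            ← gcol_cross (E := E) (cl := cl) (cp := cp) h2 p2, hxy, hxz]
        · rw [← gcol_cross (E := E) (cl := cl) (cp := cp) h2 p2,
            ← gcol_cross (E := E) (cl := cl) (cp := cp) h3 p3, hxz, hyz]

lemma gcol_classify
    (hu : u ≠ v₀) (hcc : cp ≠ cl)
    (hedge : ∀ a b : Fin r, a ≠ b → E s(a, b) ≠ cl)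
    (htri : ∀ a b d : Fin r, a ≠ b → a ≠ d → b ≠ d →
      ¬(E s(a, b) = E s(a, d) ∧ E s(a, d) = E s(b, d)))
    (Hdef : ∀ w : Fin r, w ≠ v₀ → E s(v₀, w) = cp → w = u)
    {x y z : Fin r × Fin 2 × Fin k} {col : Fin c}
    (hxy : gcol E u v₀ cl cp x y = col) (hxz : gcol E u v₀ cl cp x z = col)
    (hyz : gcol E u v₀ cl cp y z = col) :
    SameShape u v₀ x y z ∨ PairShape u v₀ x y z ∨ PairShape u v₀ x z y ∨
      PairShape u v₀ y z x := by
  by_cases h1 : x.1 = y.1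
  · by_cases h2 : x.1 = z.1
    · exact Or.inl (gcol_same_case hcc h1 h2 hxy hxz hyz)
    · exact Or.inr (Or.inl (gcol_pair_case hu hcc hedge Hdef h1 h2 hxy hxz hyz))
  · by_cases h2 : x.1 = z.1
    · refine Or.inr (Or.inr (Or.inl (gcol_pair_case hu hcc hedge Hdef h2 h1 hxz hxy ?_)))
      rw [gcol_symm]; exact hyz
    · by_cases h3 : y.1 = z.1
      · refine Or.inr (Or.inr (Or.inr (gcol_pair_case hu hcc hedge Hdef h3
          (fun hh => h1 hh.symm) hyz ?_ ?_)))
        · rw [gcol_symm]; exact hxy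
        · rw [gcol_symm]; exact hxz
      · exact absurd (gcol_distinct_case hu hcc hedge htri Hdef h1 h2 h3 hxy hxz hyz) id

end DegAux

section CountAux

variable {c r k M : ℕ} (e : Fin M ≃ Fin r × Fin 2 × Fin k)

def classT (W : Fin r) : Finset (Fin M) := univ.filter fun i => (e i).1 = W

def partT (W : Fin r) (h : Fin 2) : Finset (Fin M) :=
  univ.filter fun i => (e i).1 = W ∧ (e i).2.1 = h

lemma mem_classT {W : Fin r} {i : Fin M} : i ∈ classT e W ↔ (e i).1 = W := by
  simp [classT]

lemma mem_partT {W : Fin r} {h : Fin 2} {i : Fin M} :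
    i ∈ partT e W h ↔ (e i).1 = W ∧ (e i).2.1 = h := by
  simp [partT]

lemma card_classT (W : Fin r) : (classT e W).card = 2 * k := by
  have h2 : (univ : Finset (Fin 2 × Fin k)).card = 2 * k := by
    simp [Finset.card_univ]
  have hb := Finset.card_nbij' (s := classT e W) (t := (univ : Finset (Fin 2 × Fin k)))
    (fun i => (e i).2) (fun p => e.symm (W, p)) ?_ ?_ ?_ ?_
  · rw [hb, h2]
  · intro a _; exact mem_univ _
  · intro p _; rw [Finset.mem_coe, mem_classT]; simp
  · intro a ha
    rw [Finset.mem_coe, mem_classT] at ha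
    rw [← ha]; simp
  · intro p _; simp

lemma card_partT (W : Fin r) (hb : Fin 2) : (partT e W hb).card = k := by
  have h2 : (univ : Finset (Fin k)).card = k := by simp
  have hc := Finset.card_nbij' (s := partT e W hb) (t := (univ : Finset (Fin k)))
    (fun i => (e i).2.2) (fun p => e.symm (W, hb, p)) ?_ ?_ ?_ ?_
  · rw [hc, h2]
  · intro a _; exact mem_univ _
  · intro p _; rw [Finset.mem_coe, mem_partT]; simp
  · intro a ha
    rw [Finset.mem_coe, mem_partT] at ha
    have hd : ((W, hb, (e a).2.2) : Fin r × Fin 2 × Fin k) = e a := by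
      rw [← ha.1, ← ha.2]
    show e.symm (W, hb, (e a).2.2) = a
    rw [hd]; simp
  · intro p _; simp

lemma card_ordinary_classes {u v₀ : Fin r} (hu : u ≠ v₀) :
    (univ.filter fun W : Fin r => ¬(W = u ∨ W = v₀)).card = r - 2 := by
  have h1 : (univ.filter fun W : Fin r => ¬(W = u ∨ W = v₀)) = univ \ {u, v₀} := by
    ext a; simp [not_or]
  rw [h1, Finset.card_sdiff_of_subset (subset_univ _)]
  have : ({u, v₀} : Finset (Fin r)).card = 2 := by
    rw [Finset.card_insert_of_notMem (by simp [hu]), Finset.card_singleton]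
  rw [this]; simp

end CountAux


lemma six_mul_choose_three (n : ℕ) : 6 * n.choose 3 = (n - 2) * ((n - 1) * n) := by
  have h := Nat.descFactorial_eq_factorial_mul_choose n 3
  have h2 : n.descFactorial 3 = (n - 2) * ((n - 1) * n) := by
    simp [Nat.descFactorial_succ, Nat.descFactorial_zero]
  rw [show Nat.factorial 3 = 6 by decide] at h
  omega

lemma two_mul_choose_two (n : ℕ) : 2 * n.choose 2 = (n - 1) * n := by
  have h := Nat.descFactorial_eq_factorial_mul_choose n 2
  have h2 : n.descFactorial 2 = (n - 1) * n := by
    simp [Nat.descFactorial_succ, Nat.descFactorial_zero]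
  rw [show Nat.factorial 2 = 2 by decide] at h
  omega

lemma twentyfour_mul_choose_four (n : ℕ) : 24 * n.choose 4 = (n - 3) * ((n - 2) * ((n - 1) * n)) := by
  have h := Nat.descFactorial_eq_factorial_mul_choose n 4
  have h2 : n.descFactorial 4 = (n - 3) * ((n - 2) * ((n - 1) * n)) := by
    simp [Nat.descFactorial_succ, Nat.descFactorial_zero]
  rw [show Nat.factorial 4 = 24 by decide] at h
  omega

lemma six_choose_three_le (n : ℕ) : 6 * n.choose 3 ≤ n ^ 3 := by
  rw [six_mul_choose_three]
  calc (n - 2) * ((n - 1) * n) ≤ n * (n * n) :=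
        Nat.mul_le_mul (Nat.sub_le _ _) (Nat.mul_le_mul_right _ (Nat.sub_le _ _))
    _ = n ^ 3 := by ring

lemma six_choose_three_ge (n : ℕ) : (n - 2) ^ 3 ≤ 6 * n.choose 3 := by
  rw [six_mul_choose_three]
  calc (n - 2) ^ 3 = (n - 2) * ((n - 2) * (n - 2)) := by ring
    _ ≤ (n - 2) * ((n - 1) * n) := by
        refine Nat.mul_le_mul_left _ (Nat.mul_le_mul ?_ ?_) <;> omega

lemma twentyfour_choose_four_le (n : ℕ) : 24 * n.choose 4 ≤ n ^ 4 := by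
  rw [twentyfour_mul_choose_four]
  calc (n - 3) * ((n - 2) * ((n - 1) * n)) ≤ n * (n * (n * n)) := by
        refine Nat.mul_le_mul (Nat.sub_le _ _) (Nat.mul_le_mul (Nat.sub_le _ _)
          (Nat.mul_le_mul_right _ (Nat.sub_le _ _)))
    _ = n ^ 4 := by ring

section MonoCount

variable {c r k M : ℕ} {E : Sym2 (Fin r) → Fin c} {u v₀ : Fin r} {cl cp : Fin c}

lemma triple_subset {α : Type*} [DecidableEq α] {x y z : α} {S : Finset α}
    (hx : x ∈ S) (hy : y ∈ S) (hz : z ∈ S) : ({x, y, z} : Finset α) ⊆ S := by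
  rw [Finset.insert_subset_iff, Finset.insert_subset_iff, Finset.singleton_subset_iff]
  exact ⟨hx, hy, hz⟩

lemma pair_subset {α : Type*} [DecidableEq α] {x y : α} {S : Finset α}
    (hx : x ∈ S) (hy : y ∈ S) : ({x, y} : Finset α) ⊆ S := by
  rw [Finset.insert_subset_iff, Finset.singleton_subset_iff]
  exact ⟨hx, hy⟩

lemma mono_sum_card_le (e : Fin M ≃ Fin r × Fin 2 × Fin k)
    (hu : u ≠ v₀) (hcc : cp ≠ cl)
    (hedge : ∀ a b : Fin r, a ≠ b → E s(a, b) ≠ cl)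
    (htri : ∀ a b d : Fin r, a ≠ b → a ≠ d → b ≠ d →
      ¬(E s(a, b) = E s(a, d) ∧ E s(a, d) = E s(b, d)))
    (Hdef : ∀ w : Fin r, w ≠ v₀ → E s(v₀, w) = cp → w = u)
    (F : Sym2 (Fin M) → Fin c)
    (hF : ∀ i j : Fin M, F s(i, j) = gcol E u v₀ cl cp (e i) (e j)) :
    ∑ col : Fin c, ((Finset.powersetCard 3 (univ : Finset (Fin M))).filter
      (fun T => ∀ i ∈ T, ∀ j ∈ T, i ≠ j → F s(i, j) = col)).card
      ≤ (r - 2) * (2 * k).choose 3 + 4 * k.choose 3 + 4 * (k * k.choose 2) := by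
  classical
  set Mcol : Fin c → Finset (Finset (Fin M)) := fun col =>
    (Finset.powersetCard 3 (univ : Finset (Fin M))).filter
      (fun T => ∀ i ∈ T, ∀ j ∈ T, i ≠ j → F s(i, j) = col) with hMcol
  have hdisj : ∀ col ∈ (univ : Finset (Fin c)), ∀ col' ∈ (univ : Finset (Fin c)),
      col ≠ col' → Disjoint (Mcol col) (Mcol col') := by
    intro col _ col' _ hne
    rw [Finset.disjoint_left]
    intro T hT hT'
    obtain ⟨hTp, hTm⟩ := Finset.mem_filter.1 hT
    obtain ⟨-, hTm'⟩ := Finset.mem_filter.1 hT'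
    obtain ⟨x, y, z, hxy, hxz, hyz, hTeq⟩ :=
      Finset.card_eq_three.1 (Finset.mem_powersetCard.1 hTp).2
    have hx : x ∈ T := by rw [hTeq]; simp
    have hy : y ∈ T := by rw [hTeq]; simp
    exact hne ((hTm x hx y hy hxy).symm.trans (hTm' x hx y hy hxy))
  rw [← Finset.card_biUnion hdisj]
  set U1 := (univ.filter fun W : Fin r => ¬(W = u ∨ W = v₀)).biUnion
      (fun W => Finset.powersetCard 3 (classT e W)) with hU1
  set U2 := Finset.powersetCard 3 (partT e u 0) ∪ Finset.powersetCard 3 (partT e v₀ 0) with hU2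
  set U3 := Finset.powersetCard 3 (partT e u 1) ∪ Finset.powersetCard 3 (partT e v₀ 1) with hU3
  set U4 := ((partT e u 1) ×ˢ Finset.powersetCard 2 (partT e u 0)).image
      (fun p => insert p.1 p.2) ∪
      ((partT e v₀ 1) ×ˢ Finset.powersetCard 2 (partT e v₀ 0)).image
      (fun p => insert p.1 p.2) with hU4
  set U5 := ((partT e v₀ 0) ×ˢ Finset.powersetCard 2 (partT e u 1)).image
      (fun p => insert p.1 p.2) ∪
      ((partT e u 0) ×ˢ Finset.powersetCard 2 (partT e v₀ 1)).image
      (fun p => insert p.1 p.2) with hU5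
  have hsub : (univ : Finset (Fin c)).biUnion Mcol ⊆ U1 ∪ U2 ∪ U3 ∪ U4 ∪ U5 := by
    intro T hT
    obtain ⟨col, -, hTc⟩ := Finset.mem_biUnion.1 hT
    obtain ⟨hTp, hTm⟩ := Finset.mem_filter.1 hTc
    have hcard3 := (Finset.mem_powersetCard.1 hTp).2
    obtain ⟨x, y, z, hxy, hxz, hyz, hTeq⟩ := Finset.card_eq_three.1 hcard3
    have hx : x ∈ T := by rw [hTeq]; simp
    have hy : y ∈ T := by rw [hTeq]; simp
    have hz : z ∈ T := by rw [hTeq]; simp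
    have gxy : gcol E u v₀ cl cp (e x) (e y) = col := by rw [← hF]; exact hTm x hx y hy hxy
    have gxz : gcol E u v₀ cl cp (e x) (e z) = col := by rw [← hF]; exact hTm x hx z hz hxz
    have gyz : gcol E u v₀ cl cp (e y) (e z) = col := by rw [← hF]; exact hTm y hy z hz hyz
    have hclass := gcol_classify hu hcc hedge htri Hdef gxy gxz gyz
    have hexy : e x ≠ e y := fun hh => hxy (e.injective hh)
    have hexz : e x ≠ e z := fun hh => hxz (e.injective hh)
    have heyz : e y ≠ e z := fun hh => hyz (e.injective hh)
    have hTxyz : ({x, y, z} : Finset (Fin M)) = T := hTeq.symm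
    have hTins_x : insert x ({y, z} : Finset (Fin M)) = T := hTxyz
    have hTins_y : insert y ({x, z} : Finset (Fin M)) = T := by
      rw [← hTxyz]; ext a; simp; tauto
    have hTins_z : insert z ({x, y} : Finset (Fin M)) = T := by
      rw [← hTxyz]; ext a; simp; tauto
    have hcard3' : ({x, y, z} : Finset (Fin M)).card = 3 := by rw [hTxyz]; exact hcard3
    rcases hclass with ⟨s1, s2, srest⟩ | hp | hp | hp
    · -- all in one class
      by_cases hOrd : (e x).1 = u ∨ (e x).1 = v₀
      · rcases srest with hbad | hall1 | hpw
        · exact absurd hOrd hbad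
        · -- all second halves : U3
          refine Finset.mem_union_left _ (Finset.mem_union_left _
            (Finset.mem_union_right _ ?_))
          have hsubT : ∀ W, (e x).1 = W → T ∈ Finset.powersetCard 3 (partT e W 1) := by
            intro W hW
            refine Finset.mem_powersetCard.2 ⟨?_, hcard3⟩
            rw [← hTxyz]
            exact triple_subset ((mem_partT e).2 ⟨hW, hall1.1⟩)
              ((mem_partT e).2 ⟨s1 ▸ hW, hall1.2.1⟩)
              ((mem_partT e).2 ⟨s2 ▸ hW, hall1.2.2⟩)
          rcases hOrd with hW | hW
          · exact Finset.mem_union_left _ (hsubT u hW)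
          · exact Finset.mem_union_right _ (hsubT v₀ hW)
        · -- at most one second half
          obtain ⟨pw1, pw2, pw3⟩ := hpw
          by_cases hx1 : (e x).2.1 = 1
          · have hy0 : (e y).2.1 = 0 := fin2_eq_zero (fun hh => pw1 ⟨hx1, hh⟩)
            have hz0 : (e z).2.1 = 0 := fin2_eq_zero (fun hh => pw2 ⟨hx1, hh⟩)
            refine Finset.mem_union_left _ (Finset.mem_union_right _ ?_)
            have hmem : ∀ W, (e x).1 = W → T ∈ ((partT e W 1) ×ˢ
                Finset.powersetCard 2 (partT e W 0)).image (fun p => insert p.1 p.2) := by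
              intro W hW
              refine Finset.mem_image.2 ⟨(x, {y, z}), Finset.mem_product.2
                ⟨(mem_partT e).2 ⟨hW, hx1⟩, Finset.mem_powersetCard.2
                  ⟨pair_subset ((mem_partT e).2 ⟨s1 ▸ hW, hy0⟩)
                    ((mem_partT e).2 ⟨s2 ▸ hW, hz0⟩), Finset.card_pair hyz⟩⟩, hTins_x⟩
            rcases hOrd with hW | hW
            · exact Finset.mem_union_left _ (hmem u hW)
            · exact Finset.mem_union_right _ (hmem v₀ hW)
          · have hx0 : (e x).2.1 = 0 := fin2_eq_zero hx1
            by_cases hy1 : (e y).2.1 = 1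
            · have hz0 : (e z).2.1 = 0 := fin2_eq_zero (fun hh => pw3 ⟨hy1, hh⟩)
              refine Finset.mem_union_left _ (Finset.mem_union_right _ ?_)
              have hmem : ∀ W, (e x).1 = W → T ∈ ((partT e W 1) ×ˢ
                  Finset.powersetCard 2 (partT e W 0)).image (fun p => insert p.1 p.2) := by
                intro W hW
                refine Finset.mem_image.2 ⟨(y, {x, z}), Finset.mem_product.2
                  ⟨(mem_partT e).2 ⟨s1 ▸ hW, hy1⟩, Finset.mem_powersetCard.2
                    ⟨pair_subset ((mem_partT e).2 ⟨hW, hx0⟩)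
                      ((mem_partT e).2 ⟨s2 ▸ hW, hz0⟩), Finset.card_pair hxz⟩⟩, hTins_y⟩
              rcases hOrd with hW | hW
              · exact Finset.mem_union_left _ (hmem u hW)
              · exact Finset.mem_union_right _ (hmem v₀ hW)
            · have hy0 : (e y).2.1 = 0 := fin2_eq_zero hy1
              by_cases hz1 : (e z).2.1 = 1
              · refine Finset.mem_union_left _ (Finset.mem_union_right _ ?_)
                have hmem : ∀ W, (e x).1 = W → T ∈ ((partT e W 1) ×ˢ
                    Finset.powersetCard 2 (partT e W 0)).image (fun p => insert p.1 p.2) := by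
                  intro W hW
                  refine Finset.mem_image.2 ⟨(z, {x, y}), Finset.mem_product.2
                    ⟨(mem_partT e).2 ⟨s2 ▸ hW, hz1⟩, Finset.mem_powersetCard.2
                      ⟨pair_subset ((mem_partT e).2 ⟨hW, hx0⟩)
                        ((mem_partT e).2 ⟨s1 ▸ hW, hy0⟩), Finset.card_pair hxy⟩⟩, hTins_z⟩
                rcases hOrd with hW | hW
                · exact Finset.mem_union_left _ (hmem u hW)
                · exact Finset.mem_union_right _ (hmem v₀ hW)
              · have hz0 : (e z).2.1 = 0 := fin2_eq_zero hz1
                refine Finset.mem_union_left _ (Finset.mem_union_left _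
                  (Finset.mem_union_left _ (Finset.mem_union_right _ ?_)))
                have hsubT : ∀ W, (e x).1 = W → T ∈ Finset.powersetCard 3 (partT e W 0) := by
                  intro W hW
                  refine Finset.mem_powersetCard.2 ⟨?_, hcard3⟩
                  rw [← hTxyz]
                  exact triple_subset ((mem_partT e).2 ⟨hW, hx0⟩)
                    ((mem_partT e).2 ⟨s1 ▸ hW, hy0⟩)
                    ((mem_partT e).2 ⟨s2 ▸ hW, hz0⟩)
                rcases hOrd with hW | hW
                · exact Finset.mem_union_left _ (hsubT u hW)
                · exact Finset.mem_union_right _ (hsubT v₀ hW)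
      · -- ordinary class : U1
        refine Finset.mem_union_left _ (Finset.mem_union_left _ (Finset.mem_union_left _
          (Finset.mem_union_left _ ?_)))
        refine Finset.mem_biUnion.2 ⟨(e x).1, Finset.mem_filter.2 ⟨mem_univ _, hOrd⟩, ?_⟩
        refine Finset.mem_powersetCard.2 ⟨?_, hcard3⟩
        rw [← hTxyz]
        exact triple_subset ((mem_classT e).2 rfl) ((mem_classT e).2 s1.symm)
          ((mem_classT e).2 s2.symm)
    · -- PairShape (x y | z)
      obtain ⟨hpq, hcls, hx1, hy1, hz0⟩ := hp
      refine Finset.mem_union_right _ ?_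
      rcases hpq with ⟨hWx, hWz⟩ | ⟨hWx, hWz⟩
      · refine Finset.mem_union_left _ (Finset.mem_image.2 ⟨(z, {x, y}), Finset.mem_product.2
          ⟨(mem_partT e).2 ⟨hWz, hz0⟩, Finset.mem_powersetCard.2
            ⟨pair_subset ((mem_partT e).2 ⟨hWx, hx1⟩)
              ((mem_partT e).2 ⟨hcls ▸ hWx, hy1⟩), Finset.card_pair hxy⟩⟩, hTins_z⟩)
      · refine Finset.mem_union_right _ (Finset.mem_image.2 ⟨(z, {x, y}), Finset.mem_product.2
          ⟨(mem_partT e).2 ⟨hWz, hz0⟩, Finset.mem_powersetCard.2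
            ⟨pair_subset ((mem_partT e).2 ⟨hWx, hx1⟩)
              ((mem_partT e).2 ⟨hcls ▸ hWx, hy1⟩), Finset.card_pair hxy⟩⟩, hTins_z⟩)
    · -- PairShape (x z | y)
      obtain ⟨hpq, hcls, hx1, hz1, hy0⟩ := hp
      refine Finset.mem_union_right _ ?_
      rcases hpq with ⟨hWx, hWy⟩ | ⟨hWx, hWy⟩
      · refine Finset.mem_union_left _ (Finset.mem_image.2 ⟨(y, {x, z}), Finset.mem_product.2
          ⟨(mem_partT e).2 ⟨hWy, hy0⟩, Finset.mem_powersetCard.2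
            ⟨pair_subset ((mem_partT e).2 ⟨hWx, hx1⟩)
              ((mem_partT e).2 ⟨hcls ▸ hWx, hz1⟩), Finset.card_pair hxz⟩⟩, hTins_y⟩)
      · refine Finset.mem_union_right _ (Finset.mem_image.2 ⟨(y, {x, z}), Finset.mem_product.2
          ⟨(mem_partT e).2 ⟨hWy, hy0⟩, Finset.mem_powersetCard.2
            ⟨pair_subset ((mem_partT e).2 ⟨hWx, hx1⟩)
              ((mem_partT e).2 ⟨hcls ▸ hWx, hz1⟩), Finset.card_pair hxz⟩⟩, hTins_y⟩)
    · -- PairShape (y z | x)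
      obtain ⟨hpq, hcls, hy1, hz1, hx0⟩ := hp
      refine Finset.mem_union_right _ ?_
      rcases hpq with ⟨hWy, hWx⟩ | ⟨hWy, hWx⟩
      · refine Finset.mem_union_left _ (Finset.mem_image.2 ⟨(x, {y, z}), Finset.mem_product.2
          ⟨(mem_partT e).2 ⟨hWx, hx0⟩, Finset.mem_powersetCard.2
            ⟨pair_subset ((mem_partT e).2 ⟨hWy, hy1⟩)
              ((mem_partT e).2 ⟨hcls ▸ hWy, hz1⟩), Finset.card_pair hyz⟩⟩, hTins_x⟩)
      · refine Finset.mem_union_right _ (Finset.mem_image.2 ⟨(x, {y, z}), Finset.mem_product.2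
          ⟨(mem_partT e).2 ⟨hWx, hx0⟩, Finset.mem_powersetCard.2
            ⟨pair_subset ((mem_partT e).2 ⟨hWy, hy1⟩)
              ((mem_partT e).2 ⟨hcls ▸ hWy, hz1⟩), Finset.card_pair hyz⟩⟩, hTins_x⟩)
  have hcardU1 : U1.card ≤ (r - 2) * (2 * k).choose 3 := by
    refine le_trans Finset.card_biUnion_le ?_
    have : ∀ W ∈ (univ.filter fun W : Fin r => ¬(W = u ∨ W = v₀)),
        (Finset.powersetCard 3 (classT e W)).card = (2 * k).choose 3 := by
      intro W _
      rw [Finset.card_powersetCard, card_classT]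
    rw [Finset.sum_congr rfl this, Finset.sum_const, smul_eq_mul, card_ordinary_classes hu]
  have hcardP3 : ∀ (W : Fin r) (hb : Fin 2),
      (Finset.powersetCard 3 (partT e W hb)).card = k.choose 3 := by
    intro W hb; rw [Finset.card_powersetCard, card_partT]
  have hcardIm : ∀ (W Z : Fin r) (hb hb' : Fin 2),
      (((partT e W hb) ×ˢ Finset.powersetCard 2 (partT e Z hb')).image
        (fun p => insert p.1 p.2)).card ≤ k * k.choose 2 := by
    intro W Z hb hb'
    refine le_trans Finset.card_image_le ?_
    rw [Finset.card_product, Finset.card_powersetCard, card_partT, card_partT]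
  have hcardU2 : U2.card ≤ 2 * k.choose 3 := by
    refine le_trans (Finset.card_union_le _ _) ?_
    rw [hcardP3, hcardP3]; omega
  have hcardU3 : U3.card ≤ 2 * k.choose 3 := by
    refine le_trans (Finset.card_union_le _ _) ?_
    rw [hcardP3, hcardP3]; omega
  have hcardU4 : U4.card ≤ 2 * (k * k.choose 2) := by
    refine le_trans (Finset.card_union_le _ _) ?_
    have h1 := hcardIm u u 1 0
    have h2 := hcardIm v₀ v₀ 1 0
    omega
  have hcardU5 : U5.card ≤ 2 * (k * k.choose 2) := by
    refine le_trans (Finset.card_union_le _ _) ?_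
    have h1 := hcardIm v₀ u 0 1
    have h2 := hcardIm u v₀ 0 1
    omega
  calc ((univ : Finset (Fin c)).biUnion Mcol).card
      ≤ (U1 ∪ U2 ∪ U3 ∪ U4 ∪ U5).card := Finset.card_le_card hsub
    _ ≤ (U1 ∪ U2 ∪ U3 ∪ U4).card + U5.card := Finset.card_union_le _ _
    _ ≤ ((U1 ∪ U2 ∪ U3).card + U4.card) + U5.card :=
        Nat.add_le_add_right (Finset.card_union_le _ _) _
    _ ≤ (((U1 ∪ U2).card + U3.card) + U4.card) + U5.card :=
        Nat.add_le_add_right (Nat.add_le_add_right (Finset.card_union_le _ _) _) _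
    _ ≤ (((U1.card + U2.card) + U3.card) + U4.card) + U5.card :=
        Nat.add_le_add_right (Nat.add_le_add_right
          (Nat.add_le_add_right (Finset.card_union_le _ _) _) _) _
    _ ≤ (r - 2) * (2 * k).choose 3 + 4 * k.choose 3 + 4 * (k * k.choose 2) := by
        have := hcardU1; have := hcardU2; have := hcardU3
        have := hcardU4; have := hcardU5
        omega

lemma density_upper (hr : 2 ≤ r) (hk : 2 ≤ k) (hM : M = r * (2 * k))
    (e : Fin M ≃ Fin r × Fin 2 × Fin k)
    (hu : u ≠ v₀) (hcc : cp ≠ cl)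
    (hedge : ∀ a b : Fin r, a ≠ b → E s(a, b) ≠ cl)
    (htri : ∀ a b d : Fin r, a ≠ b → a ≠ d → b ≠ d →
      ¬(E s(a, b) = E s(a, d) ∧ E s(a, d) = E s(b, d)))
    (Hdef : ∀ w : Fin r, w ≠ v₀ → E s(v₀, w) = cp → w = u)
    (F : Sym2 (Fin M) → Fin c)
    (hF : ∀ i j : Fin M, F s(i, j) = gcol E u v₀ cl cp (e i) (e j)) :
    totalMonoDensity M c 3 F ≤ 1 / (r : ℝ) ^ 2 + 12 / (k : ℝ) := by
  classical
  have hcount := mono_sum_card_le e hu hcc hedge htri Hdef F hF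
  have hM8 : 8 ≤ M := by
    have h1 : 2 * (2 * 2) ≤ r * (2 * k) :=
      Nat.mul_le_mul hr (Nat.mul_le_mul_left 2 hk)
    omega
  -- the ℕ bound 6 * B ≤ 8 r k³
  have hB6 : 6 * ((r - 2) * (2 * k).choose 3 + 4 * k.choose 3 + 4 * (k * k.choose 2))
      ≤ 8 * r * k ^ 3 := by
    obtain ⟨r2, hr2⟩ := Nat.exists_eq_add_of_le hr
    have e1 : 6 * ((2 * k).choose 3) ≤ 8 * k ^ 3 := by
      have h1 := six_choose_three_le (2 * k)
      have h2 : (2 * k) ^ 3 = 8 * k ^ 3 := by ring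
      omega
    have e2 : 6 * k.choose 3 ≤ k ^ 3 := six_choose_three_le k
    have e3 : 2 * k.choose 2 ≤ k ^ 2 := by
      have h1 := two_mul_choose_two k
      have h2 : (k - 1) * k ≤ k * k := Nat.mul_le_mul_right _ (Nat.sub_le _ _)
      have h3 : k * k = k ^ 2 := by ring
      omega
    have hsub : r - 2 = r2 := by omega
    rw [hsub]
    calc 6 * (r2 * (2 * k).choose 3 + 4 * k.choose 3 + 4 * (k * k.choose 2))
        = r2 * (6 * (2 * k).choose 3) + 4 * (6 * k.choose 3)
            + 12 * (k * (2 * k.choose 2)) := by ring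
      _ ≤ r2 * (8 * k ^ 3) + 4 * k ^ 3 + 12 * (k * k ^ 2) := by
          refine Nat.add_le_add (Nat.add_le_add (Nat.mul_le_mul_left _ e1) ?_) ?_
          · exact Nat.mul_le_mul_left _ e2
          · exact Nat.mul_le_mul_left _ (Nat.mul_le_mul_left _ e3)
      _ = 8 * (2 + r2) * k ^ 3 := by ring
      _ = 8 * r * k ^ 3 := by rw [← hr2]
  -- switch to reals
  have hrR : (2:ℝ) ≤ (r:ℝ) := by exact_mod_cast hr
  have hkR : (2:ℝ) ≤ (k:ℝ) := by exact_mod_cast hk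
  have hMR : (M:ℝ) = 2 * r * k := by rw [hM]; push_cast; ring
  set A : ℝ := (r:ℝ) * k - 1 with hAdef
  have hA1 : A + 1 = (r:ℝ) * k := by rw [hAdef]; ring
  have hA3 : (3:ℝ) ≤ A := by nlinarith
  have hAk : (k:ℝ) ≤ A := by nlinarith
  have hApos : (0:ℝ) < A := by linarith
  have hM2 : (M:ℝ) - 2 = 2 * A := by rw [hMR, hAdef]; ring
  have hC3pos : (0:ℝ) < (M.choose 3 : ℝ) := by
    exact_mod_cast Nat.choose_pos (by omega)
  have hC3ge : ((M:ℝ) - 2) ^ 3 / 6 ≤ (M.choose 3 : ℝ) := by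
    have h1 := six_choose_three_ge M
    have h2 : (((M - 2 : ℕ)) : ℝ) = (M:ℝ) - 2 := by
      rw [Nat.cast_sub (by omega)]; norm_num
    have h3 : (((M - 2 : ℕ) ^ 3 : ℕ) : ℝ) ≤ ((6 * M.choose 3 : ℕ) : ℝ) := by exact_mod_cast h1
    push_cast at h3
    rw [h2] at h3
    linarith
  -- total density as a single fraction
  have hform : totalMonoDensity M c 3 F = ((∑ col : Fin c,
      ((Finset.powersetCard 3 (univ : Finset (Fin M))).filter
        (fun T => ∀ i ∈ T, ∀ j ∈ T, i ≠ j → F s(i, j) = col)).card : ℕ) : ℝ)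
        / (M.choose 3 : ℝ) := by
    rw [totalMonoDensity]
    simp only [monoDensity]
    rw [← Finset.sum_div, Nat.cast_sum]
  have hSSle : ((∑ col : Fin c,
      ((Finset.powersetCard 3 (univ : Finset (Fin M))).filter
        (fun T => ∀ i ∈ T, ∀ j ∈ T, i ≠ j → F s(i, j) = col)).card : ℕ) : ℝ)
      ≤ 8 * r * (k:ℝ) ^ 3 / 6 := by
    have h6 : (6:ℝ) * ((∑ col : Fin c,
        ((Finset.powersetCard 3 (univ : Finset (Fin M))).filter
          (fun T => ∀ i ∈ T, ∀ j ∈ T, i ≠ j → F s(i, j) = col)).card : ℕ) : ℝ)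
        ≤ 8 * r * (k:ℝ) ^ 3 := by
      have hn : 6 * (∑ col : Fin c,
          ((Finset.powersetCard 3 (univ : Finset (Fin M))).filter
            (fun T => ∀ i ∈ T, ∀ j ∈ T, i ≠ j → F s(i, j) = col)).card)
          ≤ 8 * r * k ^ 3 := le_trans (Nat.mul_le_mul_left 6 hcount) hB6
      exact_mod_cast hn
    linarith
  rw [hform]
  have hstep : ((∑ col : Fin c,
      ((Finset.powersetCard 3 (univ : Finset (Fin M))).filter
        (fun T => ∀ i ∈ T, ∀ j ∈ T, i ≠ j → F s(i, j) = col)).card : ℕ) : ℝ)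
      / (M.choose 3 : ℝ) ≤ (8 * r * (k:ℝ) ^ 3 / 6) / (((M:ℝ) - 2) ^ 3 / 6) := by
    refine div_le_div₀ (by positivity) hSSle (by rw [hM2]; positivity) hC3ge
  refine le_trans hstep ?_
  have heq : (8 * r * (k:ℝ) ^ 3 / 6) / (((M:ℝ) - 2) ^ 3 / 6) = r * (k:ℝ) ^ 3 / A ^ 3 := by
    rw [hM2]
    field_simp
    ring
  rw [heq]
  -- final: r k³ / A³ ≤ 1/r² + 12/k
  have hrpos : (0:ℝ) < r := by linarith
  have hkpos : (0:ℝ) < k := by linarith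
  calc (r:ℝ) * (k:ℝ) ^ 3 / A ^ 3 = (A + 1) ^ 3 / ((r:ℝ) ^ 2 * A ^ 3) := by
        rw [div_eq_div_iff (by positivity) (by positivity), hA1]
        ring
    _ ≤ (A ^ 3 + 7 * A ^ 2) / ((r:ℝ) ^ 2 * A ^ 3) := by
        gcongr
        nlinarith
    _ = 1 / (r:ℝ) ^ 2 + 7 / ((r:ℝ) ^ 2 * A) := by
        field_simp
    _ ≤ 1 / (r:ℝ) ^ 2 + 12 / (k:ℝ) := by
        have h7 : 7 / ((r:ℝ) ^ 2 * A) ≤ 12 / (k:ℝ) := by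
          rw [div_le_div_iff₀ (by positivity) hkpos]
          nlinarith
        linarith



lemma k31_lower (hr : 2 ≤ r) (hk : 2 ≤ k) (hM : M = r * (2 * k))
    (e : Fin M ≃ Fin r × Fin 2 × Fin k) (hcc : cp ≠ cl)
    (F : Sym2 (Fin M) → Fin c)
    (hF : ∀ i j : Fin M, F s(i, j) = gcol E u v₀ cl cp (e i) (e j)) :
    3 / (32 * (r : ℝ) ^ 4) ≤ k31Density M c F := by
  classical
  have hM8 : 8 ≤ M := by
    have h1 : 2 * (2 * 2) ≤ r * (2 * k) :=
      Nat.mul_le_mul hr (Nat.mul_le_mul_left 2 hk)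
    omega
  set S := ((Finset.powersetCard 4 (univ : Finset (Fin M))).filter
      (fun T => ∃ a ∈ T, ∃ b ∈ T, ∃ d ∈ T, ∃ y ∈ T,
        a ≠ b ∧ a ≠ d ∧ a ≠ y ∧ b ≠ d ∧ b ≠ y ∧ d ≠ y ∧
        badPattern F a b d y)) with hS
  -- value helper lemmas
  have hval0 : ∀ i j : Fin M, (e i).1 = v₀ → (e j).1 = v₀ →
      ¬((e i).2.1 = 1 ∧ (e j).2.1 = 1) → F s(i, j) = cp := by
    intro i j hi hj hcond
    rw [hF, gcol_same_special (hi.trans hj.symm) (Or.inr hi), if_neg hcond]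
  have hval1 : ∀ i j : Fin M, (e i).1 = v₀ → (e j).1 = v₀ →
      (e i).2.1 = 1 → (e j).2.1 = 1 → F s(i, j) = cl := by
    intro i j hi hj h1 h2
    rw [hF, gcol_same_special (hi.trans hj.symm) (Or.inr hi), if_pos ⟨h1, h2⟩]
  have hdisj01 : ∀ i j : Fin M, i ∈ partT e v₀ 0 → j ∈ partT e v₀ 1 → i ≠ j := by
    intro i j hi hj hij
    have h1 := ((mem_partT e).1 hi).2
    have h2 := ((mem_partT e).1 hj).2
    rw [hij] at h1
    rw [h1] at h2
    exact absurd h2 (by decide)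
  have hcard : k.choose 2 * k.choose 2 ≤ S.card := by
    have hprod : ((Finset.powersetCard 2 (partT e v₀ 0)) ×ˢ
        (Finset.powersetCard 2 (partT e v₀ 1))).card = k.choose 2 * k.choose 2 := by
      rw [Finset.card_product, Finset.card_powersetCard, Finset.card_powersetCard,
        card_partT, card_partT]
    rw [← hprod]
    refine Finset.card_le_card_of_injOn (fun p => p.1 ∪ p.2) ?_ ?_
    · -- maps into S
      intro p hp
      obtain ⟨hp1, hp2⟩ := Finset.mem_product.1 hp
      obtain ⟨hP, hPc⟩ := Finset.mem_powersetCard.1 hp1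
      obtain ⟨hQ, hQc⟩ := Finset.mem_powersetCard.1 hp2
      have hdisj : Disjoint p.1 p.2 := by
        rw [Finset.disjoint_left]
        intro i hi hi'
        exact hdisj01 i i (hP hi) (hQ hi') rfl
      have hcard4 : (p.1 ∪ p.2).card = 4 := by
        rw [Finset.card_union_of_disjoint hdisj, hPc, hQc]
      obtain ⟨a, b, hab, hPe⟩ := Finset.card_eq_two.1 hPc
      obtain ⟨d, y, hdy, hQe⟩ := Finset.card_eq_two.1 hQc
      have haP : a ∈ p.1 := by rw [hPe]; simp
      have hbP : b ∈ p.1 := by rw [hPe]; simp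
      have hdQ : d ∈ p.2 := by rw [hQe]; simp
      have hyQ : y ∈ p.2 := by rw [hQe]; simp
      have haU : a ∈ p.1 ∪ p.2 := Finset.mem_union_left _ haP
      have hbU : b ∈ p.1 ∪ p.2 := Finset.mem_union_left _ hbP
      have hdU : d ∈ p.1 ∪ p.2 := Finset.mem_union_right _ hdQ
      have hyU : y ∈ p.1 ∪ p.2 := Finset.mem_union_right _ hyQ
      have ha0 := (mem_partT e).1 (hP haP)
      have hb0 := (mem_partT e).1 (hP hbP)
      have hd1 := (mem_partT e).1 (hQ hdQ)
      have hy1 := (mem_partT e).1 (hQ hyQ)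
      have had : a ≠ d := hdisj01 a d (hP haP) (hQ hdQ)
      have hay : a ≠ y := hdisj01 a y (hP haP) (hQ hyQ)
      have hbd : b ≠ d := hdisj01 b d (hP hbP) (hQ hdQ)
      have hby : b ≠ y := hdisj01 b y (hP hbP) (hQ hyQ)
      have hz : ∀ i : Fin M, i ∈ partT e v₀ 0 → ¬ ((e i).2.1 = 1) := by
        intro i hi
        rw [((mem_partT e).1 hi).2]
        decide
      show p.1 ∪ p.2 ∈ S
      rw [hS]
      refine Finset.mem_filter.2 ⟨Finset.mem_powersetCard.2 ⟨Finset.subset_univ _, hcard4⟩,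
        a, haU, b, hbU, d, hdU, y, hyU, hab, had, hay, hbd, hby, hdy, ?_⟩
      refine ⟨cp, ?_, ?_, ?_, Or.inl ⟨?_, ?_, ?_⟩⟩
      · exact hval0 a b ha0.1 hb0.1 (fun hh => hz a (hP haP) hh.1)
      · exact hval0 a d ha0.1 hd1.1 (fun hh => hz a (hP haP) hh.1)
      · exact hval0 b d hb0.1 hd1.1 (fun hh => hz b (hP hbP) hh.1)
      · exact hval0 y a hy1.1 ha0.1 (fun hh => hz a (hP haP) hh.2)
      · exact hval0 y b hy1.1 hb0.1 (fun hh => hz b (hP hbP) hh.2)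
      · rw [hval1 y d hy1.1 hd1.1 hy1.2 hd1.2]
        exact fun hh => hcc hh.symm
    · -- injective
      intro p hp q hq heq
      simp only [Finset.mem_coe] at hp hq
      obtain ⟨hp1, hp2⟩ := Finset.mem_product.1 hp
      obtain ⟨hq1, hq2⟩ := Finset.mem_product.1 hq
      have hP := (Finset.mem_powersetCard.1 hp1).1
      have hPQ := (Finset.mem_powersetCard.1 hp2).1
      have hR := (Finset.mem_powersetCard.1 hq1).1
      have hRQ := (Finset.mem_powersetCard.1 hq2).1
      have key : ∀ s t : Finset (Fin M), s ⊆ partT e v₀ 0 → t ⊆ partT e v₀ 1 →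
          s = (s ∪ t).filter (fun i => (e i).2.1 = (0 : Fin 2)) := by
        intro s t hs ht
        ext i
        simp only [Finset.mem_filter, Finset.mem_union]
        constructor
        · intro hi
          exact ⟨Or.inl hi, ((mem_partT e).1 (hs hi)).2⟩
        · rintro ⟨hi | hi, h0⟩
          · exact hi
          · exact absurd h0 (by rw [((mem_partT e).1 (ht hi)).2]; decide)
      have key1 : ∀ s t : Finset (Fin M), s ⊆ partT e v₀ 0 → t ⊆ partT e v₀ 1 →
          t = (s ∪ t).filter (fun i => (e i).2.1 = (1 : Fin 2)) := by
        intro s t hs ht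
        ext i
        simp only [Finset.mem_filter, Finset.mem_union]
        constructor
        · intro hi
          exact ⟨Or.inr hi, ((mem_partT e).1 (ht hi)).2⟩
        · rintro ⟨hi | hi, h0⟩
          · exact absurd h0 (by rw [((mem_partT e).1 (hs hi)).2]; decide)
          · exact hi
      have heq' : p.1 ∪ p.2 = q.1 ∪ q.2 := heq
      have e1 : p.1 = q.1 := by
        rw [key p.1 p.2 hP hPQ, key q.1 q.2 hR hRQ, heq']
      have e2 : p.2 = q.2 := by
        rw [key1 p.1 p.2 hP hPQ, key1 q.1 q.2 hR hRQ, heq']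
      exact Prod.ext e1 e2
  -- now the real arithmetic
  have hrR : (2:ℝ) ≤ (r:ℝ) := by exact_mod_cast hr
  have hkR : (2:ℝ) ≤ (k:ℝ) := by exact_mod_cast hk
  have hrpos : (0:ℝ) < r := by linarith
  have hkpos : (0:ℝ) < k := by linarith
  have hC4pos : (0:ℝ) < (M.choose 4 : ℝ) := by
    exact_mod_cast Nat.choose_pos (by omega)
  have hMR : (M:ℝ) = 2 * r * k := by
    rw [hM]; push_cast; ring
  have hMpos : (0:ℝ) < (M:ℝ) := by positivity
  have hCeq : (k.choose 2 : ℝ) = ((k:ℝ) - 1) * k / 2 := by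
    have h := two_mul_choose_two k
    have h2 : ((k - 1 : ℕ) : ℝ) = (k:ℝ) - 1 := by
      rw [Nat.cast_sub (by omega)]; norm_num
    have h3 : ((2 * k.choose 2 : ℕ) : ℝ) = (((k - 1) * k : ℕ) : ℝ) := by rw [h]
    push_cast at h3
    rw [h2] at h3
    linarith
  have hC4le : (M.choose 4 : ℝ) ≤ (M:ℝ)^4 / 24 := by
    have h := twentyfour_choose_four_le M
    have : ((24 * M.choose 4 : ℕ) : ℝ) ≤ ((M^4 : ℕ) : ℝ) := by exact_mod_cast h
    push_cast at this
    linarith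
  have hCge : (k:ℝ)^2 / 4 ≤ (k.choose 2 : ℝ) := by
    rw [hCeq]; nlinarith
  have hstep1 : ((k.choose 2 * k.choose 2 : ℕ) : ℝ) / (M.choose 4 : ℝ) ≤ k31Density M c F := by
    rw [k31Density, ← hS]
    gcongr <;> exact_mod_cast hcard
  refine le_trans ?_ hstep1
  push_cast
  have hq : ((k:ℝ)^2/4) * ((k:ℝ)^2/4) ≤ (k.choose 2 : ℝ) * (k.choose 2 : ℝ) := by
    have h0 : (0:ℝ) ≤ (k:ℝ)^2/4 := by positivity
    exact mul_le_mul hCge hCge h0 (le_trans h0 hCge)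
  have hfinal : 3 / (32 * (r:ℝ)^4) = ((k:ℝ)^2/4 * ((k:ℝ)^2/4)) / ((M:ℝ)^4/24) := by
    rw [hMR]
    field_simp
    ring
  rw [hfinal]
  exact div_le_div₀ (by positivity) hq (by positivity) hC4le



end MonoCount


noncomputable def Fcol {c r k : ℕ} (E : Sym2 (Fin r) → Fin c) (u v₀ : Fin r) (cl cp : Fin c)
    (e : Fin (r * (2 * k)) ≃ Fin r × Fin 2 × Fin k) :
    Sym2 (Fin (r * (2 * k))) → Fin c :=
  Sym2.lift ⟨fun i j => gcol E u v₀ cl cp (e i) (e j),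
    fun i j => gcol_symm E u v₀ cl cp (e i) (e j)⟩

lemma k33Density_nonneg (n c : ℕ) (G : Sym2 (Fin n) → Fin c) : 0 ≤ k33Density n c G :=
  div_nonneg (Nat.cast_nonneg _) (Nat.cast_nonneg _)

lemma ramsey_ne_two (c0 : ℕ) (hc0 : 1 ≤ c0) : ramsey c0 3 ≠ 2 := by
  intro h
  rw [ramsey] at h
  have hne : {n | ∀ G : Sym2 (Fin n) → Fin c0, hasMonoClique n c0 3 G}.Nonempty := by
    by_contra h'
    rw [Set.not_nonempty_iff_eq_empty.1 h', Nat.sInf_empty] at h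
    omega
  have h2 : 2 ∈ {n | ∀ G : Sym2 (Fin n) → Fin c0, hasMonoClique n c0 3 G} := h ▸ Nat.sInf_mem hne
  obtain ⟨col, T, hT3, -⟩ := h2 (fun _ => ⟨0, by omega⟩)
  have hle := Finset.card_le_univ T
  have h22 : Fintype.card (Fin 2) = 2 := by simp
  omega

/-- Lemma (degree at least two): under the Ramsey-multiplicity hypotheses A1
(tightness of `ς = (R_{c-1}(3) - 1)⁻²`) and A2 (domination of `K̂_{3,1}` and `K̂_{3,3}`
densities), in any extremal looped Ramsey coloring `E` on `r = R_{c-1}(3) - 1` vertices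
every vertex is incident to at least two non-loop edges of each non-loop color. -/
theorem degree_at_least_two (c : ℕ) (hc : 2 ≤ c)
    (ς : ℝ) (hςdef : ς = (((ramsey (c - 1) 3 : ℝ) - 1)⁻¹) ^ 2)
    (hA1 : Tendsto (fun n => mcn c 3 n) atTop (nhds ς))
    (hA2 : ∃ s : ℝ, 0 < s ∧ ∀ ε : ℝ, 0 < ε → ∃ N : ℕ, ∀ m : ℕ, N ≤ m →
      ∀ F : Sym2 (Fin m) → Fin c,
        totalMonoDensity m c 3 F - ς ≥ s * (k31Density m c F + k33Density m c F) - ε)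
    (r : ℕ) (hrdef : r = ramsey (c - 1) 3 - 1)
    (E : Sym2 (Fin r) → Fin c) (cℓ : Fin c)
    (hloop : ∀ v : Fin r, E s(v, v) = cℓ)
    (hedge : ∀ u v : Fin r, u ≠ v → E s(u, v) ≠ cℓ)
    (htri : ∀ u v w : Fin r, u ≠ v → u ≠ w → v ≠ w →
      ¬(E s(u, v) = E s(u, w) ∧ E s(u, w) = E s(v, w))) :
    ∀ v : Fin r, ∀ c' : Fin c, c' ≠ cℓ →
      2 ≤ ((univ : Finset (Fin r)).filter (fun w => w ≠ v ∧ E s(v, w) = c')).card := by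
  intro v₀ c' hc'
  by_contra hcon
  push_neg at hcon
  rcases Nat.lt_or_ge r 2 with hrlt | hr
  · have hr01 : r = 0 ∨ r = 1 := by omega
    rcases hr01 with h0 | h1
    · exact absurd v₀.isLt (by omega)
    · have hram2 : ramsey (c - 1) 3 = 2 := by omega
      exact ramsey_ne_two (c - 1) (by omega) hram2
  · -- main case
    have hram : ramsey (c - 1) 3 = r + 1 := by omega
    have hrR : (2:ℝ) ≤ (r:ℝ) := by exact_mod_cast hr
    have hrpos : (0:ℝ) < (r:ℝ) := by linarith
    have hςval : ς = 1 / (r:ℝ) ^ 2 := by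
      rw [hςdef, hram]
      push_cast
      rw [add_sub_cancel_right, inv_eq_one_div, div_pow, one_pow]
    obtain ⟨s, hs, hA2'⟩ := hA2
    set δ : ℝ := 3 / (32 * (r:ℝ) ^ 4) with hδdef
    have hδ : 0 < δ := by rw [hδdef]; positivity
    obtain ⟨N, hN⟩ := hA2' (s * δ / 2) (by positivity)
    set k := N + 2 + Nat.ceil (24 / (s * δ)) with hkdef
    have hk2 : 2 ≤ k := by omega
    have hmN : N ≤ r * (2 * k) := by
      have h1 : 2 * k ≤ r * (2 * k) := Nat.le_mul_of_pos_left _ (by omega)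
      omega
    -- the defect vertex u
    have hcard1 : ((univ : Finset (Fin r)).filter
        (fun w => w ≠ v₀ ∧ E s(v₀, w) = c')).card ≤ 1 := by omega
    obtain ⟨u, hune, Hdef⟩ : ∃ u : Fin r, u ≠ v₀ ∧
        (∀ w : Fin r, w ≠ v₀ → E s(v₀, w) = c' → w = u) := by
      rcases Finset.eq_empty_or_nonempty ((univ : Finset (Fin r)).filter
          (fun w => w ≠ v₀ ∧ E s(v₀, w) = c')) with hD | hD
      · obtain ⟨u, hu⟩ := Fintype.exists_ne_of_one_lt_card (by simp; omega) v₀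
        refine ⟨u, hu, fun w hw hEw => ?_⟩
        exfalso
        have : w ∈ (univ : Finset (Fin r)).filter
            (fun w => w ≠ v₀ ∧ E s(v₀, w) = c') := Finset.mem_filter.2 ⟨Finset.mem_univ _, hw, hEw⟩
        rw [hD] at this
        exact absurd this (Finset.notMem_empty _)
      · obtain ⟨u, hu⟩ := hD
        obtain ⟨-, hune, -⟩ := Finset.mem_filter.1 hu
        refine ⟨u, hune, fun w hw hEw => ?_⟩
        exact Finset.card_le_one.1 hcard1 w
          (Finset.mem_filter.2 ⟨Finset.mem_univ _, hw, hEw⟩) u hu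
    -- build the blow-up coloring
    have ecard : Fintype.card (Fin (r * (2 * k))) = Fintype.card (Fin r × Fin 2 × Fin k) := by
      simp
    let e : Fin (r * (2 * k)) ≃ Fin r × Fin 2 × Fin k := Fintype.equivOfCardEq ecard
    let F : Sym2 (Fin (r * (2 * k))) → Fin c := Fcol E u v₀ cℓ c' e
    have hF : ∀ i j : Fin (r * (2 * k)), F s(i, j) = gcol E u v₀ cℓ c' (e i) (e j) :=
      fun i j => rfl
    have hedge' : ∀ a b : Fin r, a ≠ b → E s(a, b) ≠ cℓ := hedge
    have htri' : ∀ a b d : Fin r, a ≠ b → a ≠ d → b ≠ d →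
        ¬(E s(a, b) = E s(a, d) ∧ E s(a, d) = E s(b, d)) := htri
    have hup := density_upper hr hk2 rfl e hune hc' hedge' htri' Hdef F hF
    have hlow := k31_lower (E := E) (u := u) (v₀ := v₀) hr hk2 rfl e hc' F hF
    have hk33 := k33Density_nonneg (r * (2 * k)) c F
    have hmain := hN (r * (2 * k)) hmN F
    rw [hςval] at hmain
    have hkR : (2:ℝ) ≤ (k:ℝ) := by exact_mod_cast hk2
    have hkpos : (0:ℝ) < (k:ℝ) := by linarith
    have h1 : totalMonoDensity (r * (2 * k)) c 3 F - 1 / (r:ℝ) ^ 2 ≤ 12 / (k:ℝ) := by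
      linarith
    have h2 : s * δ - s * δ / 2 ≤
        s * (k31Density (r * (2 * k)) c F + k33Density (r * (2 * k)) c F) - s * δ / 2 := by
      have : s * δ ≤ s * (k31Density (r * (2 * k)) c F + k33Density (r * (2 * k)) c F) := by
        refine mul_le_mul_of_nonneg_left ?_ (le_of_lt hs)
        linarith
      linarith
    have h3 : s * δ / 2 ≤ 12 / (k:ℝ) := by linarith
    have hkbig : 24 / (s * δ) < (k:ℝ) := by
      have h4 : (24 / (s * δ) : ℝ) ≤ (Nat.ceil (24 / (s * δ)) : ℝ) := Nat.le_ceil _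
      have h5 : (Nat.ceil (24 / (s * δ)) : ℝ) + 2 ≤ (k:ℝ) := by
        have : Nat.ceil (24 / (s * δ)) + 2 ≤ k := by omega
        exact_mod_cast this
      linarith
    have h6 : s * δ * (k:ℝ) ≤ 24 := by
      rw [div_le_div_iff₀ (by norm_num) hkpos] at h3
      linarith
    have h7 : 24 < s * δ * (k:ℝ) := by
      rw [div_lt_iff₀ (by positivity)] at hkbig
      linarith
    linarith
end

section
/- Suppose X₁, ..., X_m are subsets of an n-element vertex set, pairwise intersecting in at most one point, that cover the vertex set, and suppose each X_i induces a monochromatic clique in a c-coloring G of K_n. If m ≤ r − 1 for some r ≥ 2, then the total density of monochromatic triangles in G is at least m·C(⌊(n − |Y|)/m⌋, 3)/C(n,3) where Y accounts for intersection points, which for fixed m and growing n is at least 1/m² − o(1) ≥ 1/(r−1)² − o(1). -/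
open Finset Filter Topology

attribute [local instance] Classical.propDecidable

/-- `X` induces a monochromatic clique of color `col` in `G`. -/
def IsMonoClique {n c : ℕ} (G : Sym2 (Fin n) → Fin c) (X : Finset (Fin n)) (col : Fin c) : Prop :=
  ∀ i ∈ X, ∀ j ∈ X, i ≠ j → G s(i, j) = col

section Aux

lemma choose3_up (q d : ℕ) : q.choose 3 + d * q.choose 2 ≤ (q + d).choose 3 := by
  induction d with
  | zero => simp
  | succ d ih =>
    have h2 : q.choose 2 ≤ (q + d).choose 2 := Nat.choose_le_choose 2 (Nat.le_add_right _ _)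
    have h1 : (q + (d+1)).choose 3 = (q+d).choose 2 + (q+d).choose 3 := by
      rw [show q + (d+1) = (q+d)+1 by ring, Nat.choose_succ_succ]
    rw [Nat.succ_mul]
    linarith

lemma choose3_down (d q : ℕ) : q.choose 3 ≤ (q - d).choose 3 + d * q.choose 2 := by
  induction d with
  | zero => simp
  | succ d ih =>
    rcases Nat.eq_zero_or_pos (q - d) with h | h
    · have h0 : q - (d+1) = 0 := by omega
      rw [h0, Nat.succ_mul]
      rw [h] at ih
      simp only [Nat.choose] at *
      linarith [ih]
    · obtain ⟨e, he⟩ : ∃ e, q - d = e + 1 := ⟨q - d - 1, by omega⟩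
      have h1 : (q - d).choose 3 = e.choose 2 + e.choose 3 := by rw [he, Nat.choose_succ_succ]
      have h2 : e.choose 2 ≤ q.choose 2 := Nat.choose_le_choose 2 (by omega)
      have h3 : q - (d+1) = e := by omega
      rw [h3, Nat.succ_mul]
      linarith

lemma tangent3 (q a : ℕ) : (q.choose 3 : ℤ) + ((a:ℤ) - q) * q.choose 2 ≤ a.choose 3 := by
  rcases le_total q a with h | h
  · obtain ⟨d, rfl⟩ := Nat.exists_eq_add_of_le h
    have h1 : ((q.choose 3 : ℤ)) + d * q.choose 2 ≤ ((q + d).choose 3 : ℤ) := by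
      exact_mod_cast choose3_up q d
    push_cast
    linarith
  · have h1 : (q.choose 3 : ℤ) ≤ ((q - (q - a)).choose 3 : ℤ) + (q - a : ℕ) * q.choose 2 := by
      exact_mod_cast choose3_down (q - a) q
    have h2 : q - (q - a) = a := by omega
    have h3 : ((q - a : ℕ) : ℤ) = (q : ℤ) - a := by
      have : a ≤ q := h
      push_cast [this]
      ring
    rw [h2, h3] at h1
    linarith

lemma sum_choose3_ge {ι : Type*} (s : Finset ι) (a : ι → ℕ) (q : ℕ)
    (h : s.card * q ≤ ∑ i ∈ s, a i) :
    s.card * q.choose 3 ≤ ∑ i ∈ s, (a i).choose 3 := by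
  have key := Finset.sum_le_sum (fun i (_ : i ∈ s) => tangent3 q (a i))
  have heq : ∑ i ∈ s, ((q.choose 3 : ℤ) + ((a i : ℤ) - q) * q.choose 2)
      = s.card * q.choose 3 + ((∑ i ∈ s, (a i : ℤ)) - s.card * q) * q.choose 2 := by
    rw [Finset.sum_add_distrib, Finset.sum_const, ← Finset.sum_mul, Finset.sum_sub_distrib,
      Finset.sum_const]
    push_cast
    ring
  rw [heq] at key
  have hpos : (0:ℤ) ≤ ((∑ i ∈ s, (a i : ℤ)) - s.card * q) * q.choose 2 := by
    apply mul_nonneg _ (by positivity)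
    have : ((s.card * q : ℕ) : ℤ) ≤ ((∑ i ∈ s, a i : ℕ) : ℤ) := by exact_mod_cast h
    push_cast at this
    linarith
  have : (↑(s.card) * (q.choose 3 : ℤ)) ≤ ∑ i ∈ s, ((a i).choose 3 : ℤ) := by linarith
  exact_mod_cast this

end Aux

set_option maxHeartbeats 2000000 in
/-- A cover of the vertex set by `m ≤ r - 1` monochromatic cliques pairwise intersecting in
at most one point forces the stated monochromatic triangle density, which for fixed `m` and
growing `n` is at least `1/m² - o(1) ≥ 1/(r-1)² - o(1)`. -/
theorem clique_cover_triangle_bound (n c r m : ℕ) (hr : 2 ≤ r) (hm1 : 1 ≤ m)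
    (hm : m ≤ r - 1)
    (G : Sym2 (Fin n) → Fin c) (X : Fin m → Finset (Fin n))
    (hcover : ∀ v : Fin n, ∃ i, v ∈ X i)
    (hint : ∀ i j, i ≠ j → (X i ∩ X j).card ≤ 1)
    (hmono : ∀ i, ∃ col : Fin c, IsMonoClique G (X i) col) :
    (totalMonoDensity n c 3 G ≥
      (m : ℝ) * ((((n - ((univ : Finset (Fin n)).filter
          (fun v => ∃ i j, i ≠ j ∧ v ∈ X i ∧ v ∈ X j)).card) / m).choose 3 : ℝ))
        / (n.choose 3)) ∧
    (∀ y : ℕ, ∀ ε : ℝ, 0 < ε → ∃ N : ℕ, ∀ n' : ℕ, N ≤ n' →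
      (m : ℝ) * ((((n' - y) / m).choose 3 : ℝ)) / (n'.choose 3)
        ≥ 1 / (m : ℝ) ^ 2 - ε) ∧
    1 / (m : ℝ) ^ 2 ≥ 1 / ((r : ℝ) - 1) ^ 2 := by
  refine ⟨?_, ?_, ?_⟩
  · -- Part 1: the counting argument
    rcases Nat.eq_zero_or_pos (n.choose 3) with h3 | h3
    · rw [h3]
      simp only [Nat.cast_zero, div_zero, ge_iff_le]
      unfold totalMonoDensity monoDensity
      positivity
    · simp only [totalMonoDensity, monoDensity, ge_iff_le, ← Finset.sum_div]
      set Y := (univ : Finset (Fin n)).filter (fun v => ∃ i j, i ≠ j ∧ v ∈ X i ∧ v ∈ X j) with hY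
      set Z : Fin m → Finset (Fin n) := fun i => X i \ Y with hZ
      set q := (n - Y.card) / m with hq
      have hdisj : ∀ i ∈ (univ : Finset (Fin m)), ∀ j ∈ univ, i ≠ j → Disjoint (Z i) (Z j) := by
        intro i _ j _ hij
        rw [Finset.disjoint_left]
        intro v hvi hvj
        rw [hZ] at hvi hvj
        simp only [Finset.mem_sdiff] at hvi hvj
        apply hvj.2
        rw [hY]
        simp only [Finset.mem_filter, Finset.mem_univ, true_and]
        exact ⟨i, j, hij, hvi.1, hvj.1⟩
      have hsum : n - Y.card ≤ ∑ i, (Z i).card := by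
        have hsub : univ \ Y ⊆ univ.biUnion Z := by
          intro v hv
          rw [Finset.mem_sdiff] at hv
          rw [Finset.mem_biUnion]
          obtain ⟨i, hi⟩ := hcover v
          exact ⟨i, Finset.mem_univ i, by rw [hZ]; exact Finset.mem_sdiff.mpr ⟨hi, hv.2⟩⟩
        have h := Finset.card_le_card hsub
        rw [Finset.card_biUnion hdisj] at h
        rwa [Finset.card_sdiff_of_subset (Finset.filter_subset _ _), Finset.card_univ, Fintype.card_fin] at h
      have hmq : m * q ≤ ∑ i, (Z i).card := by
        refine le_trans ?_ hsum
        rw [hq, mul_comm]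
        exact Nat.div_mul_le_self _ _
      have hsum3 : m * q.choose 3 ≤ ∑ i, ((Z i).card).choose 3 := by
        have := sum_choose3_ge univ (fun i => (Z i).card) q
          (by rwa [Finset.card_univ, Fintype.card_fin])
        rwa [Finset.card_univ, Fintype.card_fin] at this
      set U : Finset (Finset (Fin n)) := univ.biUnion (fun i => Finset.powersetCard 3 (Z i)) with hU
      have hdisjP : ∀ i ∈ (univ : Finset (Fin m)), ∀ j ∈ univ, i ≠ j →
          Disjoint (Finset.powersetCard 3 (Z i)) (Finset.powersetCard 3 (Z j)) := by
        intro i _ j _ hij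
        rw [Finset.disjoint_left]
        intro T hTi hTj
        rw [Finset.mem_powersetCard] at hTi hTj
        obtain ⟨v, hv⟩ : T.Nonempty := Finset.card_pos.mp (by omega)
        exact (Finset.disjoint_left.mp (hdisj i (mem_univ i) j (mem_univ j) hij))
          (hTi.1 hv) (hTj.1 hv)
      have hUcard : ∑ i, ((Z i).card).choose 3 ≤ U.card := by
        rw [hU, Finset.card_biUnion hdisjP]
        exact le_of_eq (Finset.sum_congr rfl (fun i _ => (Finset.card_powersetCard _ _).symm))
      have hUM : U ⊆ univ.biUnion (fun col : Fin c =>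
          (Finset.powersetCard 3 (univ : Finset (Fin n))).filter
            (fun T => ∀ i ∈ T, ∀ j ∈ T, i ≠ j → G s(i, j) = col)) := by
        intro T hT
        rw [hU, Finset.mem_biUnion] at hT
        obtain ⟨i, _, hTi⟩ := hT
        rw [Finset.mem_powersetCard] at hTi
        obtain ⟨col, hcol⟩ := hmono i
        rw [Finset.mem_biUnion]
        refine ⟨col, mem_univ _, ?_⟩
        rw [Finset.mem_filter, Finset.mem_powersetCard]
        refine ⟨⟨Finset.subset_univ T, hTi.2⟩, fun a ha b hb hab => hcol a ?_ b ?_ hab⟩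
        · exact Finset.sdiff_subset (hTi.1 ha)
        · exact Finset.sdiff_subset (hTi.1 hb)
      have hchain : m * q.choose 3 ≤ ∑ col : Fin c,
          ((Finset.powersetCard 3 (univ : Finset (Fin n))).filter
            (fun T => ∀ i ∈ T, ∀ j ∈ T, i ≠ j → G s(i, j) = col)).card :=
        le_trans hsum3 (le_trans hUcard
          (le_trans (Finset.card_le_card hUM) Finset.card_biUnion_le))
      have hB : (0:ℝ) < (n.choose 3 : ℝ) := by exact_mod_cast h3
      gcongr
      exact_mod_cast hchain
  · -- Part 2: the asymptotic bound
    intro y ε hε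
    set D : ℕ := y + 3 * m with hDdef
    obtain ⟨N0, hN0⟩ : ∃ N0 : ℕ, (3 * D : ℝ) / ε < N0 := exists_nat_gt _
    refine ⟨N0 + D + y + 3 * m + 3, fun n' hn' => ?_⟩
    set k : ℕ := (n' - y) / m with hkdef
    set t : ℝ := (n' : ℝ) with htdef
    have hm0 : (1:ℝ) ≤ (m:ℝ) := by exact_mod_cast hm1
    have hmpos : (0:ℝ) < m := by linarith
    have hD0 : (0:ℝ) ≤ (D:ℝ) := by positivity
    have ht0 : (0:ℝ) < t := by
      rw [htdef]; exact_mod_cast Nat.lt_of_lt_of_le (by omega) hn'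
    have htN0 : (N0 : ℝ) ≤ t := by rw [htdef]; exact_mod_cast le_trans (by omega) hn'
    have htε : 3 * (D:ℝ) < ε * t := by
      have := (div_lt_iff₀ hε).mp hN0
      nlinarith
    have htD : (D:ℝ) + 3 ≤ t := by
      rw [htdef]
      have : D + 3 ≤ n' := by omega
      exact_mod_cast this
    have hny : y ≤ n' := by omega
    have hdm := Nat.div_add_mod (n' - y) m
    rw [← hkdef] at hdm
    have hmod := Nat.mod_lt (n' - y) (show 0 < m by omega)
    have hkm : m * k + m > n' - y := by omega
    have hkR : (k : ℝ) * m ≥ (t - y) - m := by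
      have h1 : n' - y + 1 ≤ m * k + m := hkm
      have h2 : ((n' - y : ℕ) : ℝ) = t - y := by
        rw [htdef]; push_cast [hny]; ring
      have h3 : ((n' - y : ℕ) : ℝ) + 1 ≤ (m:ℝ) * k + m := by exact_mod_cast h1
      rw [h2] at h3
      linarith
    -- κ - 2 ≥ (t - D)/m ≥  0
    have hκ : ((k:ℝ) - 2) * m ≥ t - D := by
      have : (D:ℝ) = y + 3 * m := by push_cast [hDdef]; ring
      nlinarith
    have hκ2 : (2:ℝ) ≤ (k:ℝ) := by nlinarith
    have hk2 : 2 ≤ k := by exact_mod_cast hκ2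
    -- choose bounds
    have h6A : ((k:ℝ) - 2)^3 ≤ 6 * (k.choose 3 : ℝ) := by
      have h1 : (k + 1 - 3)^3 ≤ k.descFactorial 3 := Nat.pow_sub_le_descFactorial k 3
      have h2 : k.descFactorial 3 = 6 * k.choose 3 := by
        rw [Nat.descFactorial_eq_factorial_mul_choose]; norm_num [Nat.factorial]
      have h3 : k + 1 - 3 = k - 2 := by omega
      rw [h3, h2] at h1
      have h4 : ((k - 2 : ℕ) : ℝ) = (k:ℝ) - 2 := by push_cast [hk2]; ring
      calc ((k:ℝ) - 2)^3 = (((k-2:ℕ):ℝ))^3 := by rw [h4]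
        _ ≤ 6 * (k.choose 3 : ℝ) := by exact_mod_cast h1
    have hB2 : 6 * (n'.choose 3 : ℝ) ≤ t^3 := by
      have h1 : n'.descFactorial 3 ≤ n'^3 := Nat.descFactorial_le_pow n' 3
      have h2 : n'.descFactorial 3 = 6 * n'.choose 3 := by
        rw [Nat.descFactorial_eq_factorial_mul_choose]; norm_num [Nat.factorial]
      rw [h2] at h1
      rw [htdef]
      exact_mod_cast h1
    have hB : (0:ℝ) < (n'.choose 3 : ℝ) := by
      have : 0 < n'.choose 3 := Nat.choose_pos (by omega)
      exact_mod_cast this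
    rw [ge_iff_le, ← sub_nonneg] -- maybe easier: le_div_iff
    rw [sub_nonneg, le_div_iff₀ hB]
    -- goal : (1/m^2 - ε) * B ≤ m * A
    set A : ℝ := (k.choose 3 : ℝ) with hA
    set B : ℝ := (n'.choose 3 : ℝ) with hBdef
    have hA0 : (0:ℝ) ≤ A := by rw [hA]; positivity
    rcases le_or_gt (1 / (m:ℝ)^2 - ε) 0 with hc | hc
    · have : (1 / (m:ℝ)^2 - ε) * B ≤ 0 := mul_nonpos_of_nonpos_of_nonneg hc (le_of_lt hB)
      nlinarith
    · -- key cube inequality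
      have hDt : (D:ℝ) ≤ t := by linarith
      have hcube : (1 - ε * (m:ℝ)^2) * t^3 ≤ (t - D)^3 := by
        have hm21 : (1:ℝ) ≤ (m:ℝ)^2 := by nlinarith [mul_le_mul hm0 hm0 zero_le_one (by linarith : (0:ℝ) ≤ (m:ℝ))]
        have s1 : ε ≤ ε * (m:ℝ)^2 := by nlinarith
        have s2 : (1 - ε*(m:ℝ)^2)*t^3 ≤ (1-ε)*t^3 := by
          have h3 : (0:ℝ) ≤ t^3 := by positivity
          nlinarith
        have s3 : 3*(D:ℝ)*t^2 ≤ ε*t^3 := by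
          have := mul_le_mul_of_nonneg_right (le_of_lt htε) (sq_nonneg t)
          nlinarith
        have s4 : (0:ℝ) ≤ 3*(D:ℝ)^2*t - D^3 := by
          have := mul_le_mul_of_nonneg_left hDt (mul_nonneg hD0 hD0)
          nlinarith [mul_nonneg (mul_nonneg hD0 hD0) hD0]
        have expand : (t - (D:ℝ))^3 = t^3 - 3*D*t^2 + (3*D^2*t - D^3) := by ring
        linarith
      have hcube2 : (t - D)^3 ≤ ((k:ℝ) - 2)^3 * m^3 := by
        have h1 : 0 ≤ t - D := by linarith
        have h2 : t - D ≤ ((k:ℝ) - 2) * m := hκ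
        calc (t - D)^3 ≤ (((k:ℝ) - 2) * m)^3 := by
              exact pow_le_pow_left₀ h1 h2 3
          _ = ((k:ℝ) - 2)^3 * m^3 := by ring
      have hm3 : (0:ℝ) < (m:ℝ)^3 := by positivity
      have hkey : (1 - ε * (m:ℝ)^2) * t^3 ≤ 6 * A * m^3 := by
        nlinarith [hcube, hcube2, mul_le_mul_of_nonneg_right h6A (le_of_lt hm3)]
      have hm2 : (0:ℝ) < (m:ℝ)^2 := by positivity
      have hc' : (0:ℝ) < 1 - ε * (m:ℝ)^2 := by
        have heq1 : (1/(m:ℝ)^2 - ε) * m^2 = 1 - ε*m^2 := by field_simp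
        rw [← heq1]; exact mul_pos hc hm2
      have heq : (1 / (m:ℝ)^2 - ε) = (1 - ε * m^2) / m^2 := by
        field_simp
      rw [heq, div_mul_eq_mul_div, div_le_iff₀ (by positivity : (0:ℝ) < (m:ℝ)^2)]
      nlinarith [mul_le_mul_of_nonneg_left hB2 (le_of_lt hc'), hkey]
  · -- Part 3
    have hm' : (m:ℝ) ≤ (r:ℝ) - 1 := by
      have h1 : (m:ℝ) ≤ ((r - 1 : ℕ):ℝ) := by exact_mod_cast hm
      rwa [Nat.cast_sub (by omega), Nat.cast_one] at h1
    have h1 : (1:ℝ) ≤ (m:ℝ) := by exact_mod_cast hm1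
    have h2 : (0:ℝ) < (m:ℝ)^2 := by positivity
    have h3 : (m:ℝ)^2 ≤ ((r:ℝ) - 1)^2 := by nlinarith
    exact one_div_le_one_div_of_le h2 h3
end
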